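/- arXiv:2511.11365 — 2 statements merged into one kernel-verified Lean document; each statement's English description precedes it below -/
import Mathlib

section
/- For 1 < i ≤ κ and a candidate c_i ∈ P_i, a non-negative integer s_i is a left-PP-viable score for c_i if and only if there exist c_{i−1} ∈ P_{i−1} and an integer s_{i−1} with 0 ≤ s_{i−1} ≤ s* such that: (i) s_{i−1} is a left-PP-viable score for c_{i−1}; (ii) s_i − |V^{P_i}| equals the number of voters in V^{(P_{i−1},P_i)} who prefer c_i to c_{i−1}; and (iii) s_{i−1} + |V^{(P_{i−1},P_i)}| − (s_i − |V^{P_i}|) ≤ s*. -/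
/-- The vote `succ` is single-peaked with respect to the axis `lt`:
for all `a ◁ b ◁ c`, if `a ≻ b` then `b ≻ c`. -/
def SinglePeakedWith {C : Type*} (succ lt : C → C → Prop) : Prop :=
  ∀ a b c : C, lt a b → lt b c → succ a b → succ b c

/-- Party-aligned single-peakedness of a single vote, where parties are indexed by
naturals and the party axis is the natural order of the indices: there is a
perceived candidate axis, compatible with the party axis, with respect to which
the vote is single-peaked. -/
def PASPVote {C : Type*} (party : C → ℕ) (succ : C → C → Prop) : Prop :=
  ∃ lt : C → C → Prop, IsStrictTotalOrder C lt ∧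
    (∀ c c' : C, lt c c' → party c ≤ party c') ∧
    SinglePeakedWith succ lt

/-- A nomination scheme: one nominee of party `i` for each `i ∈ {1,…,k}`. -/
def ValidNom {C : Type*} (party : C → ℕ) (k : ℕ) (nom : ℕ → C) : Prop :=
  ∀ i ∈ Finset.Icc 1 k, party (nom i) = i

/-- The set of voters whose favourite nominee is the nominee of party `i`. -/
def votesFor {C V : Type*} (succ : V → C → C → Prop) (k : ℕ) (nom : ℕ → C)
    (i : ℕ) : Set V :=
  {v | ∀ i' ∈ Finset.Icc 1 k, i' ≠ i → succ v (nom i) (nom i')}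

/-- Plurality score of party `i`'s nominee in the reduced election. -/
noncomputable def score {C V : Type*} (succ : V → C → C → Prop) (k : ℕ)
    (nom : ℕ → C) (i : ℕ) : ℕ :=
  (votesFor succ k nom i).ncard

/-- Party `i`'s nominee is a Plurality winner of the reduced election. -/
def IsWinner {C V : Type*} (succ : V → C → C → Prop) (k : ℕ) (nom : ℕ → C)
    (i : ℕ) : Prop :=
  ∀ i' ∈ Finset.Icc 1 k, score succ k nom i' ≤ score succ k nom i

/-- `c'` is a Nash deviation by party `i` for the nomination scheme `nom`. -/
def NashDeviation {C V : Type*} (party : C → ℕ) (succ : V → C → C → Prop)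
    (k : ℕ) (nom : ℕ → C) (i : ℕ) (c' : C) : Prop :=
  party c' = i ∧ c' ≠ nom i ∧ ¬ IsWinner succ k nom i ∧
    IsWinner succ k (Function.update nom i c') i

/-- A nomination scheme is a pure Nash equilibrium if no party has a Nash deviation. -/
def NashEq {C V : Type*} (party : C → ℕ) (succ : V → C → C → Prop) (k : ℕ)
    (nom : ℕ → C) : Prop :=
  ∀ i ∈ Finset.Icc 1 k, ∀ c' : C, ¬ NashDeviation party succ k nom i c'

/-- Voters who vote for party `i`'s nominee in every nomination scheme. -/
def AlwaysFor {C V : Type*} (party : C → ℕ) (succ : V → C → C → Prop)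
    (k i : ℕ) : Set V :=
  {v | ∀ nom : ℕ → C, ValidNom party k nom → v ∈ votesFor succ k nom i}

/-- Voters, not in `AlwaysFor i` or `AlwaysFor (i+1)`, who always vote for the
nominee of party `i` or of party `i+1`. -/
def BetweenFor {C V : Type*} (party : C → ℕ) (succ : V → C → C → Prop)
    (k i : ℕ) : Set V :=
  {v | v ∉ AlwaysFor party succ k i ∧ v ∉ AlwaysFor party succ k (i + 1) ∧
    ∀ nom : ℕ → C, ValidNom party k nom →
      (v ∈ votesFor succ k nom i ∨ v ∈ votesFor succ k nom (i + 1))}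

/-- The voter set `V_{≤ i}`. -/
def Vle {C V : Type*} (party : C → ℕ) (succ : V → C → C → Prop)
    (k i : ℕ) : Set V :=
  (⋃ j ∈ Finset.Icc 1 i, AlwaysFor party succ k j) ∪
    (⋃ j ∈ Finset.Icc 1 (i - 1), BetweenFor party succ k j)

/-- The voter set `V_{≥ i}`. -/
def Vge {C V : Type*} (party : C → ℕ) (succ : V → C → C → Prop)
    (k i : ℕ) : Set V :=
  (⋃ j ∈ Finset.Icc i k, AlwaysFor party succ k j) ∪
    (⋃ j ∈ Finset.Icc i (k - 1), BetweenFor party succ k j)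

/-- `nom` extends the partial nomination scheme `cs` given on positions `1,…,i`. -/
def Extends {C : Type*} (i : ℕ) (cs nom : ℕ → C) : Prop :=
  ∀ j ∈ Finset.Icc 1 i, nom j = cs j

/-- `nom` extends the partial nomination scheme `cs` given on positions `i,…,k`. -/
def ExtendsR {C : Type*} (i k : ℕ) (cs nom : ℕ → C) : Prop :=
  ∀ j ∈ Finset.Icc i k, nom j = cs j

/-- Number of votes obtained by party `j`'s nominee from the voters in `W`. -/
noncomputable def votesFrom {C V : Type*} (W : Set V) (succ : V → C → C → Prop)
    (k : ℕ) (nom : ℕ → C) (j : ℕ) : ℕ :=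
  (W ∩ votesFor succ k nom j).ncard

/-- A left-feasible partial nomination scheme for `i` (with target score `sstar`):
condition (α) plus the no-deviation condition (β). -/
def LeftFeasible {C V : Type*} (party : C → ℕ) (succ : V → C → C → Prop)
    (k sstar i : ℕ) (cs : ℕ → C) : Prop :=
  (∀ j ∈ Finset.Icc 1 i, party (cs j) = j) ∧
  ∀ nom : ℕ → C, ValidNom party k nom → Extends i cs nom →
    ∀ j ∈ Finset.Icc 1 (i - 1),
      votesFrom (Vle party succ k i) succ k nom j ≤ sstar ∧
      (votesFrom (Vle party succ k i) succ k nom j < sstar →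
        ∀ c' : C, party c' = j → c' ≠ cs j →
          votesFrom (Vle party succ k i) succ k (Function.update nom j c') j < sstar)

/-- A right-feasible partial nomination scheme for `i`. -/
def RightFeasible {C V : Type*} (party : C → ℕ) (succ : V → C → C → Prop)
    (k sstar i : ℕ) (cs : ℕ → C) : Prop :=
  (∀ j ∈ Finset.Icc i k, party (cs j) = j) ∧
  ∀ nom : ℕ → C, ValidNom party k nom → ExtendsR i k cs nom →
    ∀ j ∈ Finset.Icc (i + 1) k,
      votesFrom (Vge party succ k i) succ k nom j ≤ sstar ∧
      (votesFrom (Vge party succ k i) succ k nom j < sstar →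
        ∀ c' : C, party c' = j → c' ≠ cs j →
          votesFrom (Vge party succ k i) succ k (Function.update nom j c') j < sstar)

/-- A left-PP-feasible partial nomination scheme for `i`: only condition (α). -/
def LeftPPFeasible {C V : Type*} (party : C → ℕ) (succ : V → C → C → Prop)
    (k sstar i : ℕ) (cs : ℕ → C) : Prop :=
  (∀ j ∈ Finset.Icc 1 i, party (cs j) = j) ∧
  ∀ nom : ℕ → C, ValidNom party k nom → Extends i cs nom →
    ∀ j ∈ Finset.Icc 1 (i - 1),
      votesFrom (Vle party succ k i) succ k nom j ≤ sstar

/-- A right-PP-feasible partial nomination scheme for `i`. -/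
def RightPPFeasible {C V : Type*} (party : C → ℕ) (succ : V → C → C → Prop)
    (k sstar i : ℕ) (cs : ℕ → C) : Prop :=
  (∀ j ∈ Finset.Icc i k, party (cs j) = j) ∧
  ∀ nom : ℕ → C, ValidNom party k nom → ExtendsR i k cs nom →
    ∀ j ∈ Finset.Icc (i + 1) k,
      votesFrom (Vge party succ k i) succ k nom j ≤ sstar

/-- The pair `(s, s')` is left-viable for the candidate pair `(c, c')` of
parties `P_{i-1}` and `P_i`. -/
def LeftViablePair {C V : Type*} (party : C → ℕ) (succ : V → C → C → Prop)
    (k sstar i : ℕ) (c c' : C) (s s' : ℕ) : Prop :=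
  ∃ cs : ℕ → C, LeftFeasible party succ k sstar i cs ∧
    cs (i - 1) = c ∧ cs i = c' ∧
    ∀ nom : ℕ → C, ValidNom party k nom → Extends i cs nom →
      votesFrom (Vle party succ k i) succ k nom (i - 1) = s ∧
      votesFrom (Vle party succ k i) succ k nom i = s'

/-- `s` is a left-viable score for candidate `c` of party `P_i`. -/
def LeftViableScore {C V : Type*} (party : C → ℕ) (succ : V → C → C → Prop)
    (k sstar i : ℕ) (c : C) (s : ℕ) : Prop :=
  ∃ cs : ℕ → C, LeftFeasible party succ k sstar i cs ∧ cs i = c ∧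
    ∀ nom : ℕ → C, ValidNom party k nom → Extends i cs nom →
      votesFrom (Vle party succ k i) succ k nom i = s

/-- `s` is a right-viable score for candidate `c` of party `P_i`. -/
def RightViableScore {C V : Type*} (party : C → ℕ) (succ : V → C → C → Prop)
    (k sstar i : ℕ) (c : C) (s : ℕ) : Prop :=
  ∃ cs : ℕ → C, RightFeasible party succ k sstar i cs ∧ cs i = c ∧
    ∀ nom : ℕ → C, ValidNom party k nom → ExtendsR i k cs nom →
      votesFrom (Vge party succ k i) succ k nom i = s

/-- `s` is a left-PP-viable score for candidate `c` of party `P_i`. -/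
def LeftPPViableScore {C V : Type*} (party : C → ℕ) (succ : V → C → C → Prop)
    (k sstar i : ℕ) (c : C) (s : ℕ) : Prop :=
  ∃ cs : ℕ → C, LeftPPFeasible party succ k sstar i cs ∧ cs i = c ∧
    ∀ nom : ℕ → C, ValidNom party k nom → Extends i cs nom →
      votesFrom (Vle party succ k i) succ k nom i = s

/-- `s` is a right-PP-viable score for candidate `c` of party `P_i`. -/
def RightPPViableScore {C V : Type*} (party : C → ℕ) (succ : V → C → C → Prop)
    (k sstar i : ℕ) (c : C) (s : ℕ) : Prop :=
  ∃ cs : ℕ → C, RightPPFeasible party succ k sstar i cs ∧ cs i = c ∧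
    ∀ nom : ℕ → C, ValidNom party k nom → ExtendsR i k cs nom →
      votesFrom (Vge party succ k i) succ k nom i = s
section AuxPP

variable {C V : Type*} [Fintype C] [Fintype V] {k : ℕ}
variable {party : C → ℕ} {succ : V → C → C → Prop}

private lemma succ_asymm (hsto : ∀ v : V, IsStrictTotalOrder C (succ v)) (v : V)
    {a b : C} (h1 : succ v a b) (h2 : succ v b a) : False := by
  haveI := hsto v
  exact irrefl_of (succ v) a (trans_of (succ v) h1 h2)

private lemma votesFor_disj (hsto : ∀ v : V, IsStrictTotalOrder C (succ v))
    {nom : ℕ → C} {j j' : ℕ} (hj : j ∈ Finset.Icc 1 k) (hj' : j' ∈ Finset.Icc 1 k)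
    (hjj : j ≠ j') {v : V} (h1 : v ∈ votesFor succ k nom j)
    (h2 : v ∈ votesFor succ k nom j') : False :=
  succ_asymm hsto v (h1 j' hj' (Ne.symm hjj)) (h2 j hj hjj)

private lemma mem_B_vote (hsto : ∀ v : V, IsStrictTotalOrder C (succ v))
    {nom : ℕ → C} (hv : ValidNom party k nom) {j : ℕ}
    (hj1 : 1 ≤ j) (hjk : j + 1 ≤ k) {v : V} (hB : v ∈ BetweenFor party succ k j) :
    (v ∈ votesFor succ k nom j ↔ succ v (nom j) (nom (j+1))) ∧
    (v ∈ votesFor succ k nom (j+1) ↔ succ v (nom (j+1)) (nom j)) := by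
  obtain ⟨-, -, hor⟩ := hB
  have hj : j ∈ Finset.Icc 1 k := by simp only [Finset.mem_Icc]; omega
  have hj' : j + 1 ∈ Finset.Icc 1 k := by simp only [Finset.mem_Icc]; omega
  have hcases := hor nom hv
  constructor
  · constructor
    · intro h; exact h (j+1) hj' (by omega)
    · intro h
      rcases hcases with h' | h'
      · exact h'
      · exact absurd (h' j hj (by omega)) (fun hh => succ_asymm hsto v h hh)
  · constructor
    · intro h; exact h j hj (by omega)
    · intro h
      rcases hcases with h' | h'
      · exact absurd (h' (j+1) hj' (by omega)) (fun hh => succ_asymm hsto v h hh)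
      · exact h'

private lemma mem_Vle_iff {i : ℕ} {v : V} :
    v ∈ Vle party succ k i ↔
      (∃ j, (1 ≤ j ∧ j ≤ i) ∧ v ∈ AlwaysFor party succ k j) ∨
      (∃ j, (1 ≤ j ∧ j ≤ i - 1) ∧ v ∈ BetweenFor party succ k j) := by
  simp only [Vle, Set.mem_union, Set.mem_iUnion, Finset.mem_Icc, exists_prop]

private lemma master (hsto : ∀ v : V, IsStrictTotalOrder C (succ v))
    {nom : ℕ → C} (hv : ValidNom party k nom)
    {i m : ℕ} (hm1 : 1 ≤ m) (hmi : m ≤ i) (hik : i ≤ k)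
    {v : V} (hV : v ∈ Vle party succ k i) :
    v ∈ votesFor succ k nom m ↔
      (v ∈ AlwaysFor party succ k m ∨
       (2 ≤ m ∧ v ∈ BetweenFor party succ k (m-1) ∧ succ v (nom m) (nom (m-1))) ∨
       (m + 1 ≤ i ∧ v ∈ BetweenFor party succ k m ∧ succ v (nom m) (nom (m+1)))) := by
  have hmk : m ∈ Finset.Icc 1 k := by simp only [Finset.mem_Icc]; omega
  rw [mem_Vle_iff] at hV
  constructor
  · intro h
    rcases hV with ⟨j, ⟨hj1, hji⟩, hA⟩ | ⟨j, ⟨hj1, hji⟩, hB⟩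
    · rcases eq_or_ne j m with rfl | hjm
      · exact Or.inl hA
      · exact absurd (hA nom hv) (fun hh =>
          votesFor_disj hsto (by simp only [Finset.mem_Icc]; omega) hmk hjm hh h)
    · have hjk : j + 1 ≤ k := by omega
      rcases eq_or_ne m j with rfl | hmj
      · refine Or.inr (Or.inr ⟨by omega, hB, ?_⟩)
        exact h (m+1) (by simp only [Finset.mem_Icc]; omega) (by omega)
      · rcases eq_or_ne m (j+1) with rfl | hmj'
        · refine Or.inr (Or.inl ⟨by omega, ?_, ?_⟩)
          · have : j + 1 - 1 = j := by omega
            rw [this]; exact hB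
          · have : j + 1 - 1 = j := by omega
            rw [this]
            exact h j (by simp only [Finset.mem_Icc]; omega) (by omega)
        · exfalso
          rcases hB.2.2 nom hv with h' | h'
          · exact votesFor_disj hsto (by simp only [Finset.mem_Icc]; omega) hmk
              (by omega) h' h
          · exact votesFor_disj hsto (by simp only [Finset.mem_Icc]; omega) hmk
              (by omega) h' h
  · rintro (hA | ⟨h2, hB, hs⟩ | ⟨h3, hB, hs⟩)
    · exact hA nom hv
    · have hm' : m - 1 + 1 = m := by omega
      have := (mem_B_vote hsto hv (j := m-1) (by omega) (by omega) hB).2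
      rw [hm'] at this
      exact this.mpr hs
    · exact (mem_B_vote hsto hv (j := m) (by omega) (by omega) hB).1.mpr hs

end AuxPP
section AuxPP2
set_option linter.unusedSectionVars false

variable {C V : Type*} [Fintype C] [Fintype V] {k : ℕ}
variable {party : C → ℕ} {succ : V → C → C → Prop}

private lemma char_eq (hsto : ∀ v : V, IsStrictTotalOrder C (succ v))
    {nom : ℕ → C} (hv : ValidNom party k nom)
    {i m : ℕ} (hm1 : 1 ≤ m) (hmi : m ≤ i) (hik : i ≤ k) :
    Vle party succ k i ∩ votesFor succ k nom m =
      {v | v ∈ AlwaysFor party succ k m ∨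
       (2 ≤ m ∧ v ∈ BetweenFor party succ k (m-1) ∧ succ v (nom m) (nom (m-1))) ∨
       (m + 1 ≤ i ∧ v ∈ BetweenFor party succ k m ∧ succ v (nom m) (nom (m+1)))} := by
  ext v
  simp only [Set.mem_inter_iff, Set.mem_setOf_eq]
  constructor
  · rintro ⟨hV, hvote⟩
    exact (master hsto hv hm1 hmi hik hV).mp hvote
  · intro h
    have hV : v ∈ Vle party succ k i := by
      rw [mem_Vle_iff]
      rcases h with hA | ⟨h2, hB, -⟩ | ⟨h3, hB, -⟩
      · exact Or.inl ⟨m, ⟨hm1, hmi⟩, hA⟩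
      · exact Or.inr ⟨m-1, ⟨by omega, by omega⟩, hB⟩
      · exact Or.inr ⟨m, ⟨hm1, by omega⟩, hB⟩
    exact ⟨hV, (master hsto hv hm1 hmi hik hV).mpr h⟩

private lemma score_top (hsto : ∀ v : V, IsStrictTotalOrder C (succ v))
    {nom : ℕ → C} (hv : ValidNom party k nom) {i : ℕ} (hi2 : 2 ≤ i) (hik : i ≤ k) :
    Vle party succ k i ∩ votesFor succ k nom i =
      AlwaysFor party succ k i ∪
        {v ∈ BetweenFor party succ k (i-1) | succ v (nom i) (nom (i-1))} := by
  rw [char_eq hsto hv (by omega) le_rfl hik]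
  ext v
  simp only [Set.mem_setOf_eq, Set.mem_union, Set.mem_sep_iff]
  constructor
  · rintro (h | ⟨-, h1, h2⟩ | ⟨h, -⟩)
    · exact Or.inl h
    · exact Or.inr ⟨h1, h2⟩
    · omega
  · rintro (h | ⟨h1, h2⟩)
    · exact Or.inl h
    · exact Or.inr (Or.inl ⟨hi2, h1, h2⟩)

private lemma score_indep (hsto : ∀ v : V, IsStrictTotalOrder C (succ v))
    {nom nom' : ℕ → C} (hv : ValidNom party k nom) (hv' : ValidNom party k nom')
    {i m : ℕ} (hm1 : 1 ≤ m) (hmi : m ≤ i) (hik : i ≤ k)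
    (hagree : ∀ j ∈ Finset.Icc 1 i, nom j = nom' j) :
    Vle party succ k i ∩ votesFor succ k nom m =
      Vle party succ k i ∩ votesFor succ k nom' m := by
  rw [char_eq hsto hv hm1 hmi hik, char_eq hsto hv' hm1 hmi hik]
  have em : nom m = nom' m := hagree m (by simp only [Finset.mem_Icc]; omega)
  ext v
  simp only [Set.mem_setOf_eq]
  constructor <;> rintro (h | ⟨h2, hB, hs⟩ | ⟨h3, hB, hs⟩)
  · exact Or.inl h
  · refine Or.inr (Or.inl ⟨h2, hB, ?_⟩)
    rw [← em, ← hagree (m-1) (by simp only [Finset.mem_Icc]; omega)]; exact hs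
  · refine Or.inr (Or.inr ⟨h3, hB, ?_⟩)
    rw [← em, ← hagree (m+1) (by simp only [Finset.mem_Icc]; omega)]; exact hs
  · exact Or.inl h
  · refine Or.inr (Or.inl ⟨h2, hB, ?_⟩)
    rw [em, hagree (m-1) (by simp only [Finset.mem_Icc]; omega)]; exact hs
  · refine Or.inr (Or.inr ⟨h3, hB, ?_⟩)
    rw [em, hagree (m+1) (by simp only [Finset.mem_Icc]; omega)]; exact hs

private lemma score_low (hsto : ∀ v : V, IsStrictTotalOrder C (succ v))
    {nom : ℕ → C} (hv : ValidNom party k nom)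
    {i m : ℕ} (hm1 : 1 ≤ m) (hmi : m ≤ i - 2) (hi2 : 2 ≤ i) (hik : i ≤ k) :
    Vle party succ k i ∩ votesFor succ k nom m =
      Vle party succ k (i-1) ∩ votesFor succ k nom m := by
  rw [char_eq hsto hv hm1 (by omega) hik, char_eq hsto hv hm1 (by omega) (by omega)]
  ext v
  simp only [Set.mem_setOf_eq]
  constructor <;> rintro (h | h | ⟨h3, hr⟩)
  · exact Or.inl h
  · exact Or.inr (Or.inl h)
  · exact Or.inr (Or.inr ⟨by omega, hr⟩)
  · exact Or.inl h
  · exact Or.inr (Or.inl h)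
  · exact Or.inr (Or.inr ⟨by omega, hr⟩)

private lemma score_mid (hsto : ∀ v : V, IsStrictTotalOrder C (succ v))
    {nom : ℕ → C} (hv : ValidNom party k nom) {i : ℕ} (hi2 : 2 ≤ i) (hik : i ≤ k) :
    Vle party succ k i ∩ votesFor succ k nom (i-1) =
      (Vle party succ k (i-1) ∩ votesFor succ k nom (i-1)) ∪
        {v ∈ BetweenFor party succ k (i-1) | succ v (nom (i-1)) (nom i)} := by
  have hii : i - 1 + 1 = i := by omega
  rw [char_eq hsto hv (m := i-1) (by omega) (by omega) hik,
      char_eq hsto hv (m := i-1) (by omega) le_rfl (by omega)]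
  ext v
  simp only [Set.mem_setOf_eq, Set.mem_union, Set.mem_sep_iff, hii]
  constructor
  · rintro (h | h | ⟨-, hB, hs⟩)
    · exact Or.inl (Or.inl h)
    · exact Or.inl (Or.inr (Or.inl h))
    · exact Or.inr ⟨hB, hs⟩
  · rintro ((h | h | ⟨h3, -⟩) | ⟨hB, hs⟩)
    · exact Or.inl h
    · exact Or.inr (Or.inl h)
    · omega
    · exact Or.inr (Or.inr ⟨by omega, hB, hs⟩)

end AuxPP2
section AuxPP3
set_option linter.unusedSectionVars false

variable {C V : Type*} [Fintype C] [Fintype V] {k : ℕ}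
variable {party : C → ℕ} {succ : V → C → C → Prop}

private lemma exists_valid_f (hne : ∀ i ∈ Finset.Icc 1 k, ∃ c : C, party c = i)
    (hk : 1 ≤ k) : ∃ f : ℕ → C, ValidNom party k f := by
  obtain ⟨c1, hc1⟩ := hne 1 (by simp only [Finset.mem_Icc]; omega)
  refine ⟨fun j => if h : ∃ c, party c = j then h.choose else c1, ?_⟩
  intro j hj
  obtain ⟨c, hc⟩ := hne j hj
  have hex : ∃ c, party c = j := ⟨c, hc⟩
  show party (if h : ∃ c, party c = j then h.choose else c1) = j
  rw [dif_pos hex]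
  exact hex.choose_spec

private lemma exists_ext (hne : ∀ i ∈ Finset.Icc 1 k, ∃ c : C, party c = i)
    (hk : 1 ≤ k) {i : ℕ} (cs : ℕ → C)
    (hcs : ∀ j ∈ Finset.Icc 1 i, party (cs j) = j) :
    ∃ nom : ℕ → C, ValidNom party k nom ∧ Extends i cs nom := by
  obtain ⟨f, hf⟩ := exists_valid_f hne hk
  refine ⟨fun j => if j ≤ i then cs j else f j, ?_, ?_⟩
  · intro j hj
    simp only [Finset.mem_Icc] at hj
    by_cases hji : j ≤ i
    · simp only [if_pos hji]
      exact hcs j (by simp only [Finset.mem_Icc]; omega)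
    · simp only [if_neg hji]
      exact hf j (by simp only [Finset.mem_Icc]; omega)
  · intro j hj
    simp only [Finset.mem_Icc] at hj
    simp only [if_pos hj.2]

private lemma Vle_mono {i i' : ℕ} (h : i ≤ i') :
    Vle party succ k i ⊆ Vle party succ k i' := by
  intro v hv
  rw [mem_Vle_iff] at hv ⊢
  rcases hv with ⟨j, ⟨h1, h2⟩, hm⟩ | ⟨j, ⟨h1, h2⟩, hm⟩
  · exact Or.inl ⟨j, ⟨h1, by omega⟩, hm⟩
  · exact Or.inr ⟨j, ⟨h1, by omega⟩, hm⟩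

private lemma B_disj_Vle (hne : ∀ i ∈ Finset.Icc 1 k, ∃ c : C, party c = i)
    (hsto : ∀ v : V, IsStrictTotalOrder C (succ v))
    {i : ℕ} (hi2 : 2 ≤ i) (hik : i ≤ k) {v : V}
    (hB : v ∈ BetweenFor party succ k (i-1)) (hV : v ∈ Vle party succ k (i-1)) :
    False := by
  have hii : i - 1 + 1 = i := by omega
  obtain ⟨f, hf⟩ := exists_valid_f hne (by omega)
  have hBor : ∀ nom : ℕ → C, ValidNom party k nom →
      v ∈ votesFor succ k nom (i-1) ∨ v ∈ votesFor succ k nom i := by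
    intro nom hv
    have := hB.2.2 nom hv
    rwa [hii] at this
  rw [mem_Vle_iff] at hV
  rcases hV with ⟨j, ⟨hj1, hji⟩, hA⟩ | ⟨j, ⟨hj1, hji⟩, hB'⟩
  · rcases eq_or_ne j (i-1) with rfl | hjne
    · exact hB.1 hA
    · rcases hBor f hf with h' | h'
      · exact votesFor_disj hsto (by simp only [Finset.mem_Icc]; omega)
          (by simp only [Finset.mem_Icc]; omega) hjne (hA f hf) h'
      · exact votesFor_disj hsto (by simp only [Finset.mem_Icc]; omega)
          (by simp only [Finset.mem_Icc]; omega) (by omega) (hA f hf) h'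
  · -- j ≤ i - 2
    have hji2 : j ≤ i - 2 := by omega
    rcases eq_or_ne (j+1) (i-1) with hje | hjne
    · -- v would be in AlwaysFor (i-1)
      apply hB.1
      intro nom hv
      rcases hB'.2.2 nom hv with h' | h'
      · rcases hBor nom hv with h'' | h''
        · exact absurd h'' (fun hh => votesFor_disj hsto
            (by simp only [Finset.mem_Icc]; omega)
            (by simp only [Finset.mem_Icc]; omega) (by omega) h' hh)
        · exact absurd h'' (fun hh => votesFor_disj hsto
            (by simp only [Finset.mem_Icc]; omega)
            (by simp only [Finset.mem_Icc]; omega) (by omega) h' hh)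
      · rwa [hje] at h'
    · rcases hB'.2.2 f hf with h' | h' <;> rcases hBor f hf with h'' | h''
      · exact votesFor_disj hsto (by simp only [Finset.mem_Icc]; omega)
          (by simp only [Finset.mem_Icc]; omega) (by omega) h' h''
      · exact votesFor_disj hsto (by simp only [Finset.mem_Icc]; omega)
          (by simp only [Finset.mem_Icc]; omega) (by omega) h' h''
      · exact votesFor_disj hsto (by simp only [Finset.mem_Icc]; omega)
          (by simp only [Finset.mem_Icc]; omega) (by omega) h' h''
      · exact votesFor_disj hsto (by simp only [Finset.mem_Icc]; omega)
          (by simp only [Finset.mem_Icc]; omega) (by omega) h' h''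

private lemma B_split (hsto : ∀ v : V, IsStrictTotalOrder C (succ v))
    {j : ℕ} {a b : C} (hab : a ≠ b) :
    (BetweenFor party succ k j).ncard =
      {v ∈ BetweenFor party succ k j | succ v a b}.ncard +
      {v ∈ BetweenFor party succ k j | succ v b a}.ncard := by
  rw [← Set.ncard_union_eq ?hd (Set.toFinite _) (Set.toFinite _)]
  · congr 1
    ext v
    simp only [Set.mem_union, Set.mem_sep_iff]
    constructor
    · intro h
      haveI := hsto v
      rcases trichotomous_of (succ v) a b with h' | h' | h'
      · exact Or.inl ⟨h, h'⟩
      · exact absurd h' hab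
      · exact Or.inr ⟨h, h'⟩
    · rintro (⟨h, -⟩ | ⟨h, -⟩) <;> exact h
  case hd =>
    rw [Set.disjoint_left]
    rintro v ⟨-, h1⟩ ⟨-, h2⟩
    exact succ_asymm hsto v h1 h2

private lemma A_disj_Bpref {i : ℕ} (hi1 : 1 ≤ i) {P : V → Prop} :
    Disjoint (AlwaysFor party succ k i)
      {v ∈ BetweenFor party succ k (i-1) | P v} := by
  rw [Set.disjoint_left]
  rintro v hA ⟨hB, -⟩
  have hii : i - 1 + 1 = i := by omega
  exact hB.2.1 (by rwa [hii])

end AuxPP3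

/-- Recursion for left-PP-viable scores: for `1 < i ≤ κ ≤ k` and `c_i ∈ P_i`,
`s_i` is a left-PP-viable score for `c_i` iff there exist `c_{i-1} ∈ P_{i-1}`
and `s_{i-1} ≤ s*` such that (i) `s_{i-1}` is left-PP-viable for `c_{i-1}`,
(ii) `s_i − |V^{P_i}|` equals the number of voters of `V^{(P_{i-1},P_i)}`
preferring `c_i` to `c_{i-1}`, and (iii)
`s_{i-1} + |V^{(P_{i-1},P_i)}| − (s_i − |V^{P_i}|) ≤ s*`. -/
theorem PPviable_score_recursion
    {C V : Type*} [Fintype C] [Fintype V] {k : ℕ}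
    (party : C → ℕ) (hpr : ∀ c : C, party c ∈ Finset.Icc 1 k)
    (hne : ∀ i ∈ Finset.Icc 1 k, ∃ c : C, party c = i)
    (succ : V → C → C → Prop) (hsto : ∀ v : V, IsStrictTotalOrder C (succ v))
    (hPASP : ∀ v : V, PASPVote party (succ v))
    (sstar : ℕ) (i : ℕ) (hi1 : 1 < i) (hik : i ≤ k)
    (ci : C) (hci : party ci = i) (si : ℕ) :
    LeftPPViableScore party succ k sstar i ci si ↔
      ∃ c' : C, party c' = i - 1 ∧ ∃ s' : ℕ, s' ≤ sstar ∧
        LeftPPViableScore party succ k sstar (i - 1) c' s' ∧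
        si = (AlwaysFor party succ k i).ncard +
          {v ∈ BetweenFor party succ k (i - 1) | succ v ci c'}.ncard ∧
        s' + (BetweenFor party succ k (i - 1)).ncard ≤ sstar +
          {v ∈ BetweenFor party succ k (i - 1) | succ v ci c'}.ncard := by
  classical
  have hk1 : 1 ≤ k := by omega
  constructor
  · rintro ⟨cs, ⟨hparties, hcond⟩, hcsi, hscore⟩
    obtain ⟨nom0, hnom0v, hnom0e⟩ := exists_ext hne hk1 cs hparties
    have hc'p : party (cs (i-1)) = i - 1 :=
      hparties (i-1) (by simp only [Finset.mem_Icc]; omega)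
    have hcine : ci ≠ cs (i-1) := by
      intro h
      have h2 := hc'p
      rw [← h, hci] at h2
      omega
    have hn0i : nom0 i = ci := by
      rw [hnom0e i (by simp only [Finset.mem_Icc]; omega), hcsi]
    have hn0i1 : nom0 (i-1) = cs (i-1) :=
      hnom0e (i-1) (by simp only [Finset.mem_Icc]; omega)
    refine ⟨cs (i-1), hc'p, votesFrom (Vle party succ k (i-1)) succ k nom0 (i-1),
      ?_, ?_, ?_, ?_⟩
    · refine le_trans ?_ (hcond nom0 hnom0v hnom0e (i-1)
        (by simp only [Finset.mem_Icc]; omega))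
      exact Set.ncard_le_ncard
        (Set.inter_subset_inter_left _ (Vle_mono (by omega))) (Set.toFinite _)
    · refine ⟨cs, ⟨fun j hj => hparties j (by simp only [Finset.mem_Icc] at hj ⊢; omega),
        ?_⟩, rfl, ?_⟩
      · intro nom hv hext j hj
        simp only [Finset.mem_Icc] at hj
        set nom' := Function.update nom i (cs i) with hnom'
        have hv' : ValidNom party k nom' := by
          intro j' hj'
          rcases eq_or_ne j' i with rfl | hne'
          · simp only [hnom', Function.update_self]
            exact hparties j' (by simp only [Finset.mem_Icc]; omega)
          · simp only [hnom', Function.update_of_ne hne']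
            exact hv j' hj'
        have hext' : Extends i cs nom' := by
          intro j' hj'
          simp only [Finset.mem_Icc] at hj'
          rcases eq_or_ne j' i with rfl | hne'
          · simp only [hnom', Function.update_self]
          · simp only [hnom', Function.update_of_ne hne']
            exact hext j' (by simp only [Finset.mem_Icc]; omega)
        have hagree : ∀ j' ∈ Finset.Icc 1 (i-1), nom j' = nom' j' := by
          intro j' hj'
          simp only [Finset.mem_Icc] at hj'
          simp only [hnom', Function.update_of_ne (by omega : j' ≠ i)]
        have e1 : votesFrom (Vle party succ k (i-1)) succ k nom j =
            votesFrom (Vle party succ k (i-1)) succ k nom' j := by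
          simp only [votesFrom]
          rw [score_indep hsto hv hv' (by omega) (by omega) (by omega) hagree]
        rw [e1]
        refine le_trans ?_ (hcond nom' hv' hext' j
          (by simp only [Finset.mem_Icc]; omega))
        exact Set.ncard_le_ncard
          (Set.inter_subset_inter_left _ (Vle_mono (by omega))) (Set.toFinite _)
      · intro nom hv hext
        simp only [votesFrom]
        rw [score_indep hsto hv hnom0v (by omega) le_rfl (by omega) (fun j' hj' => by
          simp only [Finset.mem_Icc] at hj'
          rw [hext j' (by simp only [Finset.mem_Icc]; omega),
            hnom0e j' (by simp only [Finset.mem_Icc]; omega)])]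
    · have h1 := hscore nom0 hnom0v hnom0e
      simp only [votesFrom] at h1
      rw [score_top hsto hnom0v (by omega) hik,
        Set.ncard_union_eq (A_disj_Bpref (by omega)) (Set.toFinite _) (Set.toFinite _),
        hn0i, hn0i1] at h1
      exact h1.symm
    · have h2 := hcond nom0 hnom0v hnom0e (i-1) (by simp only [Finset.mem_Icc]; omega)
      simp only [votesFrom] at h2 ⊢
      rw [score_mid hsto hnom0v (by omega) hik] at h2
      rw [Set.ncard_union_eq ?dmid (Set.toFinite _) (Set.toFinite _)] at h2
      case dmid =>
        rw [Set.disjoint_left]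
        rintro v ⟨hV, -⟩ ⟨hB, -⟩
        exact B_disj_Vle hne hsto (by omega) hik hB hV
      rw [hn0i, hn0i1] at h2
      have hsplit := B_split (party := party) (succ := succ) (k := k)
        (j := i-1) hsto hcine
      omega
  · rintro ⟨c', hc'p, s', hs'le, ⟨cs', ⟨hparties', hcond'⟩, hcs'm, hscore'⟩, hsi, hineq⟩
    have hcine : ci ≠ c' := by
      intro h
      have h2 := hc'p
      rw [← h, hci] at h2
      omega
    set cs : ℕ → C := Function.update cs' i ci with hcs
    have hcsval : ∀ j ∈ Finset.Icc 1 i, party (cs j) = j := by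
      intro j hj
      simp only [Finset.mem_Icc] at hj
      rcases eq_or_ne j i with rfl | hne'
      · simp only [hcs, Function.update_self]; exact hci
      · simp only [hcs, Function.update_of_ne hne']
        exact hparties' j (by simp only [Finset.mem_Icc]; omega)
    have hagree' : ∀ nom : ℕ → C, Extends i cs nom → Extends (i-1) cs' nom := by
      intro nom hext j hj
      simp only [Finset.mem_Icc] at hj
      rw [hext j (by simp only [Finset.mem_Icc]; omega)]
      simp only [hcs, Function.update_of_ne (by omega : j ≠ i)]
    have hnomvals : ∀ nom : ℕ → C, Extends i cs nom →
        nom i = ci ∧ nom (i-1) = c' := by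
      intro nom hext
      constructor
      · rw [hext i (by simp only [Finset.mem_Icc]; omega)]
        simp only [hcs, Function.update_self]
      · rw [hext (i-1) (by simp only [Finset.mem_Icc]; omega)]
        simp only [hcs, Function.update_of_ne (by omega : i - 1 ≠ i)]
        exact hcs'm
    refine ⟨cs, ⟨hcsval, ?_⟩, by simp only [hcs, Function.update_self], ?_⟩
    · intro nom hv hext j hj
      simp only [Finset.mem_Icc] at hj
      obtain ⟨hni, hni1⟩ := hnomvals nom hext
      rcases eq_or_ne j (i-1) with rfl | hne'
      · simp only [votesFrom]
        rw [score_mid hsto hv (by omega) hik]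
        rw [Set.ncard_union_eq ?dmid2 (Set.toFinite _) (Set.toFinite _)]
        case dmid2 =>
          rw [Set.disjoint_left]
          rintro v ⟨hV, -⟩ ⟨hB, -⟩
          exact B_disj_Vle hne hsto (by omega) hik hB hV
        have hseq := hscore' nom hv (hagree' nom hext)
        simp only [votesFrom] at hseq
        rw [hseq, hni, hni1]
        have hsplit := B_split (party := party) (succ := succ) (k := k)
          (j := i-1) hsto hcine
        omega
      · simp only [votesFrom]
        rw [score_low hsto hv (by omega) (by omega) (by omega) hik]
        have := hcond' nom hv (hagree' nom hext) j
          (by simp only [Finset.mem_Icc]; omega)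
        simpa only [votesFrom] using this
    · intro nom hv hext
      obtain ⟨hni, hni1⟩ := hnomvals nom hext
      simp only [votesFrom]
      rw [score_top hsto hv (by omega) hik,
        Set.ncard_union_eq (A_disj_Bpref (by omega)) (Set.toFinite _) (Set.toFinite _),
        hni, hni1]
      exact hsi.symm
end

section
/- Let (L, R) be an extremal party placement for a party axis ◁_𝒫 (L contains the |L| leftmost parties and R the |R| rightmost), and let ≻_v be a vote that is party-aligned single-peaked with axis ◁_𝒫. Suppose the candidates of the parties in L ∪ R do not form a suffix of ≻_v. Let a be v's least-favourite candidate among the candidates of parties outside L ∪ R, let b be v's most-favourite candidate among candidates of parties in L ∪ R, and let P_a, P_b be their parties. Then: if P_b ∈ R, then P_a directly follows the ◁_𝒫-last party of L; and if P_b ∈ L, then P_a directly precedes the ◁_𝒫-first party of R. -/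
/-- Lemma (vote-imposed restrictions): let `(L, R)` be an extremal party
placement for the party axis `ltP` (`L` downward closed, `R` upward closed,
disjoint), and let `≻_v` be party-aligned single-peaked with axis `ltP`.
Suppose the candidates of the parties in `L ∪ R` do not form a suffix of the
vote. If `a` is the least-favourite candidate among parties outside `L ∪ R` and
`b` the most-favourite candidate among parties in `L ∪ R`, then: if `P_b ∈ R`
then `P_a` directly follows the last party of `L` (it is the `ltP`-minimum of
the parties outside `L`), and if `P_b ∈ L` then `P_a` directly precedes the
first party of `R` (it is the `ltP`-maximum of the parties outside `R`). -/
theorem extremal_placement_restriction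
    {C P : Type*} (party : C → P) (hsurj : Function.Surjective party)
    (ltP : P → P → Prop) (hltP : IsStrictTotalOrder P ltP)
    (succ : C → C → Prop) (hsto : IsStrictTotalOrder C succ)
    (hPASP : ∃ lt : C → C → Prop, IsStrictTotalOrder C lt ∧
      (∀ c c' : C, party c ≠ party c' → lt c c' → ltP (party c) (party c')) ∧
      SinglePeakedWith succ lt)
    (L R : Set P) (hdisj : Disjoint L R)
    (hLdown : ∀ p ∈ L, ∀ q : P, ltP q p → q ∈ L)
    (hRup : ∀ p ∈ R, ∀ q : P, ltP p q → q ∈ R)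
    (hnsuffix : ¬ ∀ c c' : C, party c ∉ L ∪ R → party c' ∈ L ∪ R → succ c c')
    (a b : C) (haP : party a ∉ L ∪ R) (hbP : party b ∈ L ∪ R)
    (ha : ∀ c : C, party c ∉ L ∪ R → c ≠ a → succ c a)
    (hb : ∀ c : C, party c ∈ L ∪ R → c ≠ b → succ b c) :
    (party b ∈ R → ∀ q : P, q ∉ L → q ≠ party a → ltP (party a) q) ∧
    (party b ∈ L → ∀ q : P, q ∉ R → q ≠ party a → ltP q (party a)) := by
  obtain ⟨lt, hlt, hcompat, hsp⟩ := hPASP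
  haveI := hsto; haveI := hltP; haveI := hlt
  push_neg at hnsuffix
  obtain ⟨c0, c1, hc0, hc1, hnc⟩ := hnsuffix
  have hc01 : c0 ≠ c1 := by rintro rfl; exact hc0 hc1
  have h10 : succ c1 c0 := by
    rcases trichotomous_of succ c0 c1 with h | h | h
    · exact absurd h hnc
    · exact absurd h hc01
    · exact h
  have hba : succ b a := by
    have h1 : succ b c0 := by
      by_cases h : c1 = b
      · rwa [h] at h10
      · exact trans_of succ (hb c1 hc1 h) h10
    by_cases h : c0 = a
    · rwa [h] at h1
    · exact trans_of succ h1 (ha c0 hc0 h)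
  have hab_ne : party a ≠ party b := fun h => haP (h ▸ hbP)
  constructor
  · intro hbR q hqL hq
    by_cases hqR : q ∈ R
    · rcases trichotomous_of ltP (party a) q with h | h | h
      · exact h
      · exact absurd h.symm hq
      · exact absurd (hRup q hqR _ h) (fun hh => haP (Or.inr hh))
    · have hqout : q ∉ L ∪ R := by simp [hqL, hqR]
      obtain ⟨c, rfl⟩ := hsurj q
      have hca : c ≠ a := fun h => hq (congrArg party h)
      have hsca : succ c a := ha c hqout hca
      rcases trichotomous_of ltP (party a) (party c) with h | h | h
      · exact h
      · exact absurd h.symm hq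
      · exfalso
        have hlca : lt c a := by
          rcases trichotomous_of lt c a with h' | h' | h'
          · exact h'
          · exact absurd h' hca
          · exact absurd (hcompat a c (fun he => hq he.symm) h') (fun hh => (asymm_of ltP h) hh)
        have hlab : lt a b := by
          have hne : a ≠ b := fun h => hab_ne (congrArg party h)
          rcases trichotomous_of lt a b with h' | h' | h'
          · exact h'
          · exact absurd h' hne
          · exact absurd (hRup _ hbR _ (hcompat b a (fun he => hab_ne he.symm) h')) (fun hh => haP (Or.inr hh))
        exact (asymm_of succ hba) (hsp c a b hlca hlab hsca)
  · intro hbL q hqR hq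
    by_cases hqL : q ∈ L
    · rcases trichotomous_of ltP q (party a) with h | h | h
      · exact h
      · exact absurd h hq
      · exact absurd (hLdown q hqL _ h) (fun hh => haP (Or.inl hh))
    · have hqout : q ∉ L ∪ R := by simp [hqL, hqR]
      obtain ⟨c, rfl⟩ := hsurj q
      have hca : c ≠ a := fun h => hq (congrArg party h)
      have hsca : succ c a := ha c hqout hca
      rcases trichotomous_of ltP (party c) (party a) with h | h | h
      · exact h
      · exact absurd h hq
      · exfalso
        have hlac : lt a c := by
          rcases trichotomous_of lt a c with h' | h' | h'
          · exact h'
          · exact absurd h'.symm hca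
          · exact absurd (hcompat c a hq h') (fun hh => (asymm_of ltP h) hh)
        have hlba : lt b a := by
          have hne : b ≠ a := fun h => hab_ne (congrArg party h).symm
          rcases trichotomous_of lt b a with h' | h' | h'
          · exact h'
          · exact absurd h' hne
          · exact absurd (hLdown _ hbL _ (hcompat a b hab_ne h')) (fun hh => haP (Or.inl hh))
        exact (asymm_of succ hsca) (hsp b a c hlba hlac hba)
end
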